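/- Let r, s ≥ 3 and r/2 < t < r, and let H = Θ_t^r(ℓ_1,…,ℓ_s) be the r-uniform theta hypergraph. If r−t divides r, k = r/(r−t), and ℓ_i > 2(k−1) for some 1 ≤ i ≤ s, then χ^e(H) = 2; otherwise (i.e., if r−t does not divide r, or r−t divides r and ℓ_i ≤ 2(k−1) for all i), χ^e(H) = 1. -/

import Mathlib

open Finset

open Classical in
/-- `σ^e(v) = Σ_{e ∋ v} w(e)` for a hypergraph with edge set `E`. -/
noncomputable def sigmaE {V : Type*} [Fintype V] (E : Finset (Finset V))
    (w : Finset V → ℕ) (v : V) : ℕ :=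
  ∑ e ∈ E.filter (fun e => v ∈ e), w e

/-- The hypergraph with edge set `E` admits an edge weighting with weights in
`{1,…,k}` such that `σ^e` is a proper vertex coloring: every edge with at least
two vertices contains two vertices with distinct colors. -/
def HasNSDEdgeWeighting {V : Type*} [Fintype V] (E : Finset (Finset V)) (k : ℕ) : Prop :=
  ∃ w : Finset V → ℕ, (∀ e ∈ E, 1 ≤ w e ∧ w e ≤ k) ∧
    ∀ e ∈ E, 2 ≤ e.card → ∃ u ∈ e, ∃ v ∈ e, sigmaE E w u ≠ sigmaE E w v

/-- The vertex type of the `r`-uniform `t`-tight theta hypergraph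
`Θ_t^r(L 0, …, L (s-1))`: `t` common initial vertices `x_1,…,x_t`,
`t` common final vertices `y_1,…,y_t`, and for each path `i` its
`L i * (r-t) - t` internal vertices. -/
def ThetaVert (r t s : ℕ) (L : Fin s → ℕ) : Type :=
  (Fin t ⊕ Fin t) ⊕ (Σ i : Fin s, Fin (L i * (r - t) - t))

instance (r t s : ℕ) (L : Fin s → ℕ) : Fintype (ThetaVert r t s L) := by
  unfold ThetaVert; infer_instance

instance (r t s : ℕ) (L : Fin s → ℕ) : DecidableEq (ThetaVert r t s L) := by
  unfold ThetaVert; infer_instance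

/-- Membership of a vertex of the theta hypergraph in the `m`-th edge
(0-indexed, `m < L i`) of the `i`-th path.  In the `i`-th path, the vertex
`x_a` has (0-indexed) position `a`, the vertex `y_b` has position
`L i * (r-t) + b`, and the `c`-th internal vertex of path `i` has position
`t + c`; the `m`-th edge consists of the vertices at positions
`m*(r-t), …, m*(r-t) + r - 1`. -/
def thetaMem (r t : ℕ) {s : ℕ} (L : Fin s → ℕ) (i : Fin s) (m : ℕ) :
    ThetaVert r t s L → Prop
  | Sum.inl (Sum.inl a) =>
      m * (r - t) ≤ (a : ℕ) ∧ (a : ℕ) < m * (r - t) + r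
  | Sum.inl (Sum.inr b) =>
      m * (r - t) ≤ L i * (r - t) + (b : ℕ) ∧ L i * (r - t) + (b : ℕ) < m * (r - t) + r
  | Sum.inr ⟨i', c⟩ =>
      i' = i ∧ m * (r - t) ≤ t + (c : ℕ) ∧ t + (c : ℕ) < m * (r - t) + r

open Classical in
/-- The edge set of the `r`-uniform `t`-tight theta hypergraph with `s` paths of
lengths `L 0, …, L (s-1)`. -/
noncomputable def thetaEdges (r t : ℕ) {s : ℕ} (L : Fin s → ℕ) :
    Finset (Finset (ThetaVert r t s L)) :=
  (Finset.univ : Finset (Σ i : Fin s, Fin (L i))).image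
    (fun p => Finset.univ.filter (fun v => thetaMem r t L p.1 (p.2 : ℕ) v))


namespace ThetaProof

variable {r t s : ℕ} {L : Fin s → ℕ}

open Classical in
/-- The `m`-th edge of the `i`-th path. -/
noncomputable def ed (r t : ℕ) {s : ℕ} (L : Fin s → ℕ) (i : Fin s) (m : ℕ) :
    Finset (ThetaVert r t s L) :=
  Finset.univ.filter (fun v => thetaMem r t L i m v)

def vX (r : ℕ) (s : ℕ) (L : Fin s → ℕ) (a : Fin t) : ThetaVert r t s L := Sum.inl (Sum.inl a)
def vY (r : ℕ) (s : ℕ) (L : Fin s → ℕ) (b : Fin t) : ThetaVert r t s L := Sum.inl (Sum.inr b)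
def vI (r t : ℕ) {s : ℕ} (L : Fin s → ℕ) (i : Fin s) (c : Fin (L i * (r - t) - t)) :
    ThetaVert r t s L := Sum.inr ⟨i, c⟩

lemma mem_ed {i : Fin s} {m : ℕ} {v : ThetaVert r t s L} :
    v ∈ ed r t L i m ↔ thetaMem r t L i m v := by
  simp [ed]

lemma vX_mem {i : Fin s} {m : ℕ} {a : Fin t} :
    vX r s L a ∈ ed r t L i m ↔ m * (r - t) ≤ (a : ℕ) ∧ (a : ℕ) < m * (r - t) + r := by
  rw [mem_ed]; simp [vX, thetaMem]

lemma vY_mem {i : Fin s} {m : ℕ} {b : Fin t} :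
    vY r s L b ∈ ed r t L i m ↔
      m * (r - t) ≤ L i * (r - t) + (b : ℕ) ∧ L i * (r - t) + (b : ℕ) < m * (r - t) + r := by
  rw [mem_ed]; simp [vY, thetaMem]

lemma vI_mem {i j : Fin s} {m : ℕ} {c : Fin (L j * (r - t) - t)} :
    vI r t L j c ∈ ed r t L i m ↔
      j = i ∧ m * (r - t) ≤ t + (c : ℕ) ∧ t + (c : ℕ) < m * (r - t) + r := by
  rw [mem_ed]; simp [vI, thetaMem]

lemma mem_thetaEdges {e : Finset (ThetaVert r t s L)} :
    e ∈ thetaEdges r t L ↔ ∃ i : Fin s, ∃ m : ℕ, m < L i ∧ e = ed r t L i m := by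
  simp only [thetaEdges, Finset.mem_image, Finset.mem_univ, true_and]
  constructor
  · rintro ⟨⟨i, m⟩, he⟩
    exact ⟨i, m, m.isLt, by rw [← he]; rfl⟩
  · rintro ⟨i, m, hm, rfl⟩
    exact ⟨⟨i, ⟨m, hm⟩⟩, rfl⟩

lemma ed_mem_thetaEdges {i : Fin s} {m : ℕ} (hm : m < L i) :
    ed r t L i m ∈ thetaEdges r t L :=
  mem_thetaEdges.mpr ⟨i, m, hm, rfl⟩


lemma lt_of_mul_lt {m n d : ℕ} (h : m * d < n * d) : m < n := by
  by_contra h'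
  push_neg at h'
  exact absurd (Nat.mul_le_mul_right d h') (by omega)

/-- Distinct edges of the same path are distinct sets. -/
lemma ed_inj {i : Fin s} {m m' : ℕ} (hr0 : 0 < r) (hd : 0 < r - t)
    (hL : t ≤ L i * (r - t)) (hmm : m < m') (hm' : m' < L i) :
    ed r t L i m ≠ ed r t L i m' := by
  intro h
  have hmLd : m * (r - t) + (r - t) ≤ L i * (r - t) := by
    have h1 : (m + 1) * (r - t) ≤ L i * (r - t) := Nat.mul_le_mul_right _ (by omega)
    have h2 : (m + 1) * (r - t) = m * (r - t) + (r - t) := by ring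
    omega
  have hmm' : m * (r - t) < m' * (r - t) := by
    have h1 : (m + 1) * (r - t) ≤ m' * (r - t) := Nat.mul_le_mul_right _ (by omega)
    have h2 : (m + 1) * (r - t) = m * (r - t) + (r - t) := by ring
    omega
  by_cases hp : m * (r - t) < t
  · -- witness vX at position m * (r-t)
    have h1 : vX r s L ⟨m * (r - t), by omega⟩ ∈ ed r t L i m := vX_mem.mpr (by simp; omega)
    rw [h] at h1
    have h2 := vX_mem.mp h1
    simp at h2
    omega
  · push_neg at hp
    have hc : m * (r - t) - t < L i * (r - t) - t := by omega
    have h1 : vI r t L i ⟨m * (r - t) - t, hc⟩ ∈ ed r t L i m :=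
      vI_mem.mpr ⟨rfl, by simp; omega⟩
    rw [h] at h1
    have h2 := (vI_mem.mp h1).2
    simp at h2
    omega

/-- An edge of a non-degenerate path differs from every edge of another path. -/
lemma ed_ne_of_path_ne {i j : Fin s} {m m' : ℕ} (htr : t < r) (hd : 0 < r - t)
    (hnd : t < L i * (r - t)) (hm : m < L i) (hij : i ≠ j) :
    ed r t L i m ≠ ed r t L j m' := by
  intro h
  have hle : m * (r - t) + (r - t) ≤ L i * (r - t) := by
    have h1 : (m + 1) * (r - t) ≤ L i * (r - t) := Nat.mul_le_mul_right _ (by omega)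
    have h2 : (m + 1) * (r - t) = m * (r - t) + (r - t) := by ring
    omega
  have hc : max (m * (r - t)) t - t < L i * (r - t) - t := by omega
  have h1 : vI r t L i ⟨max (m * (r - t)) t - t, hc⟩ ∈ ed r t L i m :=
    vI_mem.mpr ⟨rfl, by simp; omega⟩
  rw [h] at h1
  exact hij (vI_mem.mp h1).1

/-- Generic strict comparison of `σ` values via subset of edge-neighbourhoods. -/
lemma sigma_lt_of_subset {V : Type*} [Fintype V] [DecidableEq V] {E : Finset (Finset V)}
    {w : Finset V → ℕ} {u v : V} (hw : ∀ e ∈ E, 1 ≤ w e)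
    (hsub : ∀ e ∈ E, u ∈ e → v ∈ e)
    (e₀ : Finset V) (he₀ : e₀ ∈ E) (hv : v ∈ e₀) (hu : u ∉ e₀) :
    sigmaE E w u < sigmaE E w v := by
  classical
  unfold sigmaE
  apply Finset.sum_lt_sum_of_subset (i := e₀)
  · intro e he
    simp only [Finset.mem_filter] at he ⊢
    exact ⟨he.1, hsub e he.1 he.2⟩
  · simp only [Finset.mem_filter]; exact ⟨he₀, hv⟩
  · simp only [Finset.mem_filter]; tauto
  · exact hw e₀ he₀
  · intro j _ _; exact Nat.zero_le _


/-- Exact description of `σ` at an internal vertex. -/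
lemma sigma_vI {i : Fin s} (hr0 : 0 < r) (hd : 0 < r - t) (hLi : t ≤ L i * (r - t))
    (c : Fin (L i * (r - t) - t)) (w : Finset (ThetaVert r t s L) → ℕ) :
    sigmaE (thetaEdges r t L) w (vI r t L i c) =
      ∑ m ∈ (Finset.range (L i)).filter
        (fun m => m * (r - t) ≤ t + (c : ℕ) ∧ t + (c : ℕ) < m * (r - t) + r),
        w (ed r t L i m) := by
  classical
  rw [show sigmaE (thetaEdges r t L) w (vI r t L i c) =
      ∑ e ∈ ((Finset.range (L i)).filter
        (fun m => m * (r - t) ≤ t + (c : ℕ) ∧ t + (c : ℕ) < m * (r - t) + r)).image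
        (ed r t L i), w e from ?_]
  · rw [Finset.sum_image]
    intro m hm m' hm' hee
    simp only [Finset.mem_coe, Finset.mem_filter, Finset.mem_range] at hm hm'
    by_contra hne
    rcases Nat.lt_or_ge m m' with h | h
    · exact ed_inj hr0 hd hLi h hm'.1 hee
    · exact ed_inj hr0 hd hLi (by omega) hm.1 hee.symm
  · unfold sigmaE
    apply Finset.sum_congr _ (fun _ _ => rfl)
    ext e
    simp only [Finset.mem_filter, Finset.mem_image, Finset.mem_range, mem_thetaEdges]
    constructor
    · rintro ⟨⟨j, m, hm, rfl⟩, hv⟩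
      obtain ⟨rfl, h1, h2⟩ := vI_mem.mp hv
      exact ⟨m, ⟨hm, h1, h2⟩, rfl⟩
    · rintro ⟨m, ⟨hm, h1, h2⟩, rfl⟩
      exact ⟨⟨i, m, hm, rfl⟩, vI_mem.mpr ⟨rfl, h1, h2⟩⟩

/-- Comparison of `σ` at two `x`-vertices. -/
lemma sigma_vX_lt {w : Finset (ThetaVert r t s L) → ℕ} (htr : t < r)
    (hw : ∀ e ∈ thetaEdges r t L, 1 ≤ w e) {a a' : Fin t} (haa : (a : ℕ) ≤ (a' : ℕ))
    {j' : Fin s} {m' : ℕ} (hm' : m' < L j') (h1 : m' * (r - t) ≤ (a' : ℕ))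
    (h2 : (a : ℕ) < m' * (r - t)) :
    sigmaE (thetaEdges r t L) w (vX r s L a) < sigmaE (thetaEdges r t L) w (vX r s L a') := by
  apply sigma_lt_of_subset hw ?_ (ed r t L j' m') (ed_mem_thetaEdges hm')
      (vX_mem.mpr ⟨h1, by have := a'.isLt; omega⟩) (by rw [vX_mem]; push_neg; intro h; omega)
  intro e he hu
  obtain ⟨j, m, hm, rfl⟩ := mem_thetaEdges.mp he
  obtain ⟨g1, g2⟩ := vX_mem.mp hu
  exact vX_mem.mpr ⟨by omega, by have := a'.isLt; omega⟩

/-- Comparison of `σ` at two `y`-vertices. -/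
lemma sigma_vY_lt {w : Finset (ThetaVert r t s L) → ℕ} (htr : t < r) (hd : 0 < r - t)
    (hw : ∀ e ∈ thetaEdges r t L, 1 ≤ w e) {b b' : Fin t} (hbb : (b' : ℕ) ≤ (b : ℕ))
    {j' : Fin s} {m' : ℕ} (hm' : m' < L j')
    (h1 : L j' * (r - t) + (b' : ℕ) < m' * (r - t) + r)
    (h2 : m' * (r - t) + r ≤ L j' * (r - t) + (b : ℕ)) :
    sigmaE (thetaEdges r t L) w (vY r s L b) < sigmaE (thetaEdges r t L) w (vY r s L b') := by
  have key : ∀ (j : Fin s) (m : ℕ), m < L j → m * (r - t) < L j * (r - t) := by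
    intro j m hm
    have g1 : (m + 1) * (r - t) ≤ L j * (r - t) := Nat.mul_le_mul_right _ (by omega)
    have g2 : (m + 1) * (r - t) = m * (r - t) + (r - t) := by ring
    omega
  apply sigma_lt_of_subset hw ?_ (ed r t L j' m') (ed_mem_thetaEdges hm')
      (vY_mem.mpr ⟨by have := key j' m' hm'; omega, h1⟩)
      (by rw [vY_mem]; push_neg; intro h; omega)
  intro e he hu
  obtain ⟨j, m, hm, rfl⟩ := mem_thetaEdges.mp he
  obtain ⟨g1, g2⟩ := vY_mem.mp hu
  exact vY_mem.mpr ⟨by have := key j m hm; omega, by omega⟩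


lemma le_sigmaE {V : Type*} [Fintype V] [DecidableEq V] {E A : Finset (Finset V)}
    (w : Finset V → ℕ) (v : V) (hA : A ⊆ E) (hv : ∀ e ∈ A, v ∈ e) :
    ∑ e ∈ A, w e ≤ sigmaE E w v := by
  classical
  unfold sigmaE
  apply Finset.sum_le_sum_of_subset
  intro e he
  simp only [Finset.mem_filter]
  exact ⟨hA he, hv e he⟩

/-- Lower bound for `σ` at an `x`-vertex coming from two distinct paths. -/
lemma sigma_vX_ge (htr : t < r) (hd : 0 < r - t) {w : Finset (ThetaVert r t s L) → ℕ}
    {i j : Fin s} (hij : i ≠ j) (hLj : t ≤ L j * (r - t)) (hndi : t < L i * (r - t))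
    {N : ℕ} (hNi : N ≤ L i) (hNj : N ≤ L j) {a : Fin t} (ha : ∀ m, m < N → m * (r - t) ≤ (a : ℕ)) :
    (∑ m ∈ Finset.range N, w (ed r t L i m)) + (∑ m ∈ Finset.range N, w (ed r t L j m)) ≤
      sigmaE (thetaEdges r t L) w (vX r s L a) := by
  classical
  have hLi : t ≤ L i * (r - t) := le_of_lt hndi
  set T1 := (Finset.range N).image (ed r t L i) with hT1
  set T2 := (Finset.range N).image (ed r t L j) with hT2
  have hdisj : Disjoint T1 T2 := by
    rw [Finset.disjoint_left]
    rintro e he1 he2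
    simp only [hT1, hT2, Finset.mem_image, Finset.mem_range] at he1 he2
    obtain ⟨m, hm, rfl⟩ := he1
    obtain ⟨m', hm', h'⟩ := he2
    exact ed_ne_of_path_ne htr hd hndi (by omega) hij h'.symm
  have hinj : ∀ (u : Fin s), t ≤ L u * (r - t) → N ≤ L u →
      ∑ e ∈ (Finset.range N).image (ed r t L u), w e
        = ∑ m ∈ Finset.range N, w (ed r t L u m) := by
    intro u hu hNu
    rw [Finset.sum_image]
    intro m hm m' hm' hee
    simp only [Finset.mem_coe, Finset.mem_range] at hm hm'
    by_contra hne
    rcases Nat.lt_or_ge m m' with h | h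
    · exact ed_inj (by omega) hd hu h (by omega) hee
    · exact ed_inj (by omega) hd hu (by omega) (by omega) hee.symm
  have hsum : ∑ e ∈ T1 ∪ T2, w e =
      (∑ m ∈ Finset.range N, w (ed r t L i m)) + (∑ m ∈ Finset.range N, w (ed r t L j m)) := by
    rw [Finset.sum_union hdisj, hinj i hLi hNi, hinj j hLj hNj]
  rw [← hsum]
  apply le_sigmaE
  · intro e he
    simp only [T1, T2, Finset.mem_union, Finset.mem_image, Finset.mem_range] at he
    rcases he with ⟨m, hm, rfl⟩ | ⟨m, hm, rfl⟩
    · exact ed_mem_thetaEdges (by omega)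
    · exact ed_mem_thetaEdges (by omega)
  · intro e he
    simp only [T1, T2, Finset.mem_union, Finset.mem_image, Finset.mem_range] at he
    have := a.isLt
    rcases he with ⟨m, hm, rfl⟩ | ⟨m, hm, rfl⟩ <;>
      exact vX_mem.mpr ⟨ha m hm, by omega⟩

/-- Lower bound for `σ` at a `y`-vertex coming from two distinct paths. -/
lemma sigma_vY_ge (htr : t < r) (hd : 0 < r - t) (ht1 : 1 ≤ t) {w : Finset (ThetaVert r t s L) → ℕ}
    {i j : Fin s} (hij : i ≠ j) (hLj : t ≤ L j * (r - t)) (hndi : t < L i * (r - t))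
    {N : ℕ} (hNi : N ≤ L i) (hNj : N ≤ L j) {b : Fin t}
    (hbi : ∀ m, m < N → L i * (r - t) + (b : ℕ) < (L i - 1 - m) * (r - t) + r)
    (hbj : ∀ m, m < N → L j * (r - t) + (b : ℕ) < (L j - 1 - m) * (r - t) + r) :
    (∑ m ∈ Finset.range N, w (ed r t L i (L i - 1 - m)))
      + (∑ m ∈ Finset.range N, w (ed r t L j (L j - 1 - m))) ≤
      sigmaE (thetaEdges r t L) w (vY r s L b) := by
  classical
  have hLi : t ≤ L i * (r - t) := le_of_lt hndi
  have hL1 : 1 ≤ L i := by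
    rcases Nat.eq_zero_or_pos (L i) with h0 | h; · rw [h0] at hLi; simp at hLi; omega
    · exact h
  have hL2 : 1 ≤ L j := by
    rcases Nat.eq_zero_or_pos (L j) with h0 | h; · rw [h0] at hLj; simp at hLj; omega
    · exact h
  set T1 := (Finset.range N).image (fun m => ed r t L i (L i - 1 - m)) with hT1
  set T2 := (Finset.range N).image (fun m => ed r t L j (L j - 1 - m)) with hT2
  have hdisj : Disjoint T1 T2 := by
    rw [Finset.disjoint_left]
    rintro e he1 he2
    simp only [hT1, hT2, Finset.mem_image, Finset.mem_range] at he1 he2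
    obtain ⟨m, hm, rfl⟩ := he1
    obtain ⟨m', hm', h'⟩ := he2
    exact ed_ne_of_path_ne htr hd hndi (by omega) hij h'.symm
  have hinj : ∀ (u : Fin s), t ≤ L u * (r - t) → N ≤ L u →
      ∑ e ∈ (Finset.range N).image (fun m => ed r t L u (L u - 1 - m)), w e
        = ∑ m ∈ Finset.range N, w (ed r t L u (L u - 1 - m)) := by
    intro u hu hNu
    rw [Finset.sum_image]
    intro m hm m' hm' hee
    simp only [Finset.mem_coe, Finset.mem_range] at hm hm'
    by_contra hne
    have h1u : 1 ≤ L u := by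
      rcases Nat.eq_zero_or_pos (L u) with h0 | h; · rw [h0] at hu; simp at hu; omega
      · exact h
    rcases Nat.lt_or_ge (L u - 1 - m) (L u - 1 - m') with h | h
    · exact ed_inj (by omega) hd hu h (by omega) hee
    · exact ed_inj (by omega) hd hu (by omega) (by omega) hee.symm
  have hsum : ∑ e ∈ T1 ∪ T2, w e =
      (∑ m ∈ Finset.range N, w (ed r t L i (L i - 1 - m)))
        + (∑ m ∈ Finset.range N, w (ed r t L j (L j - 1 - m))) := by
    rw [Finset.sum_union hdisj, hinj i hLi hNi, hinj j hLj hNj]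
  rw [← hsum]
  apply le_sigmaE
  · intro e he
    simp only [T1, T2, Finset.mem_union, Finset.mem_image, Finset.mem_range] at he
    rcases he with ⟨m, hm, rfl⟩ | ⟨m, hm, rfl⟩
    · exact ed_mem_thetaEdges (by omega)
    · exact ed_mem_thetaEdges (by omega)
  · intro e he
    simp only [T1, T2, Finset.mem_union, Finset.mem_image, Finset.mem_range] at he
    rcases he with ⟨m, hm, rfl⟩ | ⟨m, hm, rfl⟩
    · refine vY_mem.mpr ⟨?_, hbi m hm⟩
      have : (L i - 1 - m) * (r - t) ≤ L i * (r - t) := Nat.mul_le_mul_right _ (by omega)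
      omega
    · refine vY_mem.mpr ⟨?_, hbj m hm⟩
      have : (L j - 1 - m) * (r - t) ≤ L j * (r - t) := Nat.mul_le_mul_right _ (by omega)
      omega


/-- The interior adjacent-position comparison for the non-divisible case. -/
lemma sigma_vI_succ_lt {w : Finset (ThetaVert r t s L) → ℕ} (htr : t < r) (hd : 0 < r - t)
    (hw : ∀ e ∈ thetaEdges r t L, 1 ≤ w e) (hndvd : ¬ (r - t) ∣ r) {i : Fin s} {p m' : ℕ}
    (hm' : m' < L i) (heq : p + 1 = m' * (r - t) + r) (hp1 : t ≤ p)
    (hp2 : p + 1 < L i * (r - t)) :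
    sigmaE (thetaEdges r t L) w (vI r t L i ⟨p + 1 - t, by omega⟩) <
      sigmaE (thetaEdges r t L) w (vI r t L i ⟨p - t, by omega⟩) := by
  apply sigma_lt_of_subset hw ?_ (ed r t L i m') (ed_mem_thetaEdges hm')
      (vI_mem.mpr ⟨rfl, by simp; omega⟩)
      (by rw [vI_mem]; push_neg; intro _ h; simp at h ⊢; omega)
  intro e he hu
  obtain ⟨j, m, hm, rfl⟩ := mem_thetaEdges.mp he
  obtain ⟨rfl, g1, g2⟩ := vI_mem.mp hu
  simp only [Fin.val_mk] at g1 g2 ⊢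
  have hkey : m * (r - t) ≤ p := by
    rcases Nat.lt_or_ge (m * (r - t)) (p + 1) with h | h
    · omega
    · exfalso
      have hmeq : m * (r - t) = p + 1 := by omega
      have hgt : m' * (r - t) < m * (r - t) := by omega
      have hmm : m' < m := lt_of_mul_lt hgt
      obtain ⟨u, rfl⟩ : ∃ u, m = m' + u := ⟨m - m', by omega⟩
      have hexp : (m' + u) * (r - t) = m' * (r - t) + (r - t) * u := by ring
      exact hndvd ⟨u, by omega⟩
  refine vI_mem.mpr ⟨rfl, by simp only [Fin.val_mk]; omega, by simp only [Fin.val_mk]; omega⟩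

/-- In the divisible case `r = k(r-t)`, the edges of path `i` containing an internal
vertex at overall position `t + c` form the interval `[q-(k-1), q]`, `q = (t+c)/(r-t)`. -/
lemma filter_interior_eq_Icc {i : Fin s} {k p : ℕ} (hd : 0 < r - t) (hrk : r = k * (r - t))
    (hk3 : 3 ≤ k) (ht : t ≤ p) (hp : p < L i * (r - t)) :
    (Finset.range (L i)).filter (fun m => m * (r - t) ≤ p ∧ p < m * (r - t) + r)
      = Finset.Icc (p / (r - t) - (k - 1)) (p / (r - t)) := by
  have htk : t = (k - 1) * (r - t) := by
    have : (k - 1) * (r - t) + (r - t) = k * (r - t) := by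
      have : (k - 1) + 1 = k := by omega
      calc (k - 1) * (r - t) + (r - t) = ((k - 1) + 1) * (r - t) := by ring
        _ = k * (r - t) := by rw [this]
    omega
  have hmod : p / (r - t) * (r - t) + p % (r - t) = p := by
    conv_rhs => rw [← Nat.div_add_mod p (r - t)]
    ring
  have hmlt := Nat.mod_lt p hd
  set q := p / (r - t) with hq
  have h1 : q * (r - t) ≤ p := by omega
  have h2 : p < q * (r - t) + (r - t) := by omega
  have hq1 : k - 1 ≤ q := by
    have : (k - 1) * (r - t) < (q + 1) * (r - t) := by
      have e : (q + 1) * (r - t) = q * (r - t) + (r - t) := by ring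
      omega
    have := lt_of_mul_lt this; omega
  have hq2 : q < L i := by
    have : q * (r - t) < L i * (r - t) := by omega
    exact lt_of_mul_lt this
  ext m
  simp only [Finset.mem_filter, Finset.mem_range, Finset.mem_Icc]
  constructor
  · rintro ⟨hmL, hle, hlt⟩
    have e1 : m ≤ q := by
      have g : m * (r - t) < (q + 1) * (r - t) := by
        have e : (q + 1) * (r - t) = q * (r - t) + (r - t) := by ring
        omega
      have := lt_of_mul_lt g; omega
    have e2 : q < m + k := by
      have g : p < (m + k) * (r - t) := by
        have e : (m + k) * (r - t) = m * (r - t) + k * (r - t) := by ring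
        omega
      have g2 : q * (r - t) < (m + k) * (r - t) := by omega
      exact lt_of_mul_lt g2
    omega
  · rintro ⟨hlo, hhi⟩
    refine ⟨by omega, ?_, ?_⟩
    · have := Nat.mul_le_mul_right (r - t) hhi; omega
    · have g : q + 1 ≤ m + k := by omega
      have hmul := Nat.mul_le_mul_right (r - t) g
      have e : (q + 1) * (r - t) = q * (r - t) + (r - t) := by ring
      have e2 : (m + k) * (r - t) = m * (r - t) + k * (r - t) := by ring
      omega

/-- `σ` at an internal vertex in the divisible case. -/
lemma sigma_vI_div {i : Fin s} {k : ℕ} (hd : 0 < r - t) (hrk : r = k * (r - t))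
    (hk3 : 3 ≤ k) (c : Fin (L i * (r - t) - t)) (hLi : t ≤ L i * (r - t))
    (w : Finset (ThetaVert r t s L) → ℕ) :
    sigmaE (thetaEdges r t L) w (vI r t L i c) =
      ∑ m ∈ Finset.Icc ((t + (c : ℕ)) / (r - t) - (k - 1)) ((t + (c : ℕ)) / (r - t)),
        w (ed r t L i m) := by
  rw [sigma_vI (by omega) hd hLi c w, filter_interior_eq_Icc hd hrk hk3 (by omega) (by omega)]


lemma sigmaE_congr {V : Type*} [Fintype V] {E : Finset (Finset V)}
    {w w' : Finset V → ℕ} (h : ∀ e ∈ E, w e = w' e) (v : V) :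
    sigmaE E w v = sigmaE E w' v := by
  classical
  unfold sigmaE
  apply Finset.sum_congr rfl
  intro e he
  rw [Finset.mem_filter] at he
  exact h e he.1

lemma exists_other (hs : 3 ≤ s) (i : Fin s) : ∃ j : Fin s, j ≠ i := by
  rcases Nat.lt_or_ge (i : ℕ) 1 with h | h
  · exact ⟨⟨1, by omega⟩, by intro hh; rw [Fin.ext_iff] at hh; simp at hh; omega⟩
  · exact ⟨⟨0, by omega⟩, by intro hh; rw [Fin.ext_iff] at hh; simp at hh; omega⟩

/-- `σ` at an internal vertex for the all-ones weighting, divisible case. -/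
lemma sigma_vI_ones {i : Fin s} {k : ℕ} (hd : 0 < r - t) (hrk : r = k * (r - t))
    (hk3 : 3 ≤ k) (hLi : t ≤ L i * (r - t)) (c : Fin (L i * (r - t) - t)) :
    sigmaE (thetaEdges r t L) (fun _ => 1) (vI r t L i c) = k := by
  rw [sigma_vI_div hd hrk hk3 c hLi, Finset.sum_const, smul_eq_mul, mul_one, Nat.card_Icc]
  have htk : t = (k - 1) * (r - t) := by
    have e : (k - 1) * (r - t) + (r - t) = k * (r - t) := by
      have e2 : (k - 1) + 1 = k := by omega
      calc (k - 1) * (r - t) + (r - t) = ((k - 1) + 1) * (r - t) := by ring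
        _ = k * (r - t) := by rw [e2]
    omega
  have hq1 : k - 1 ≤ (t + (c : ℕ)) / (r - t) :=
    (Nat.le_div_iff_mul_le hd).mpr (by omega)
  omega

open Classical in
/-- The 2-weighting used in the divisible long-path case: weight 2 on the edges
`m ≡ 0 mod (k-1)` of every path, weight 1 elsewhere. -/
noncomputable def w2 (r t : ℕ) {s : ℕ} (L : Fin s → ℕ) (k : ℕ)
    (e : Finset (ThetaVert r t s L)) : ℕ :=
  if ∃ j : Fin s, ∃ m : ℕ, m < L j ∧ (k - 1) ∣ m ∧ e = ed r t L j m then 2 else 1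

lemma w2_ge_one {k : ℕ} (e : Finset (ThetaVert r t s L)) : 1 ≤ w2 r t L k e := by
  unfold w2; split <;> omega

lemma w2_le_two {k : ℕ} (e : Finset (ThetaVert r t s L)) : w2 r t L k e ≤ 2 := by
  unfold w2; split <;> omega

lemma w2_ed_zero {k : ℕ} {j : Fin s} (hj : 0 < L j) : w2 r t L k (ed r t L j 0) = 2 :=
  if_pos ⟨j, 0, hj, Dvd.intro 0 rfl, rfl⟩

lemma w2_ed {k : ℕ} {i : Fin s} {m : ℕ} (htr : t < r) (hd : 0 < r - t)
    (hndi : t < L i * (r - t)) (hm : m < L i) :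
    w2 r t L k (ed r t L i m) = if (k - 1) ∣ m then 2 else 1 := by
  unfold w2
  by_cases hdq : (k - 1) ∣ m
  · rw [if_pos hdq, if_pos ⟨i, m, hm, hdq, rfl⟩]
  · rw [if_neg hdq, if_neg ?_]
    rintro ⟨j, m', hm', hdvd', hee⟩
    by_cases hij : i = j
    · subst hij
      have hmm : m = m' := by
        by_contra hne
        rcases Nat.lt_or_ge m m' with h | h
        · exact ed_inj (by omega) hd (le_of_lt hndi) h hm' hee
        · exact ed_inj (by omega) hd (le_of_lt hndi) (by omega) hm hee.symm
      exact hdq (hmm ▸ hdvd')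
    · exact ed_ne_of_path_ne htr hd hndi hm hij hee

/-- Adjacent interior classes have distinct `σ` whenever the first and last
window edges have distinct weights (divisible case). -/
lemma sigma_vI_adjacent_ne {i : Fin s} {k q : ℕ} (hd : 0 < r - t) (hrk : r = k * (r - t))
    (hk3 : 3 ≤ k) (htk : t = (k - 1) * (r - t)) (hq1 : k - 1 ≤ q) (hq2 : q + 1 < L i)
    (w : Finset (ThetaVert r t s L) → ℕ)
    (hww : w (ed r t L i (q - (k - 1))) ≠ w (ed r t L i (q + 1))) :
    sigmaE (thetaEdges r t L) w
        (vI r t L i ⟨q * (r - t) - t, by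
          have h1 := Nat.mul_le_mul_right (r - t) hq1
          have h2 := Nat.mul_le_mul_right (r - t) (show q + 1 ≤ L i by omega)
          have e : (q + 1) * (r - t) = q * (r - t) + (r - t) := by ring
          omega⟩) ≠
      sigmaE (thetaEdges r t L) w
        (vI r t L i ⟨(q + 1) * (r - t) - t, by
          have h1 := Nat.mul_le_mul_right (r - t) (show k - 1 ≤ q + 1 by omega)
          have h2 := Nat.mul_le_mul_right (r - t) (show q + 2 ≤ L i by omega)
          have e1 : (q + 2) * (r - t) = (q + 1) * (r - t) + (r - t) := by ring
          omega⟩) := by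
  have hmul1 := Nat.mul_le_mul_right (r - t) hq1
  have hmul2 := Nat.mul_le_mul_right (r - t) (show q + 1 ≤ L i by omega)
  have he1 : (q + 1) * (r - t) = q * (r - t) + (r - t) := by ring
  have hLi : t ≤ L i * (r - t) := by
    have := Nat.mul_le_mul_right (r - t) (show k - 1 ≤ L i by omega)
    omega
  rw [sigma_vI_div hd hrk hk3 _ hLi, sigma_vI_div hd hrk hk3 _ hLi]
  simp only [Fin.val_mk]
  have hv1 : t + (q * (r - t) - t) = q * (r - t) := by omega
  have hv2 : t + ((q + 1) * (r - t) - t) = (q + 1) * (r - t) := by omega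
  rw [hv1, hv2, Nat.mul_div_cancel q hd, Nat.mul_div_cancel (q + 1) hd]
  have hIcc1 : Finset.Icc (q - (k - 1)) q
      = insert (q - (k - 1)) (Finset.Icc (q - (k - 1) + 1) q) := by
    ext x; simp only [Finset.mem_Icc, Finset.mem_insert]; omega
  have hIcc2 : Finset.Icc (q + 1 - (k - 1)) (q + 1)
      = insert (q + 1) (Finset.Icc (q - (k - 1) + 1) q) := by
    ext x; simp only [Finset.mem_Icc, Finset.mem_insert]; omega
  rw [hIcc1, hIcc2, Finset.sum_insert (by simp), Finset.sum_insert (by simp)]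
  omega


lemma le_of_mul_le {a b d : ℕ} (hd : 0 < d) (h : a * d ≤ b * d) : a ≤ b := by
  by_contra h'
  push_neg at h'
  have g := Nat.mul_le_mul_right d (show b + 1 ≤ a by omega)
  have e : (b + 1) * d = b * d + d := by ring
  omega

/-- Any edge containing two `x`-classes is properly coloured. -/
lemma good_edge_xpair {w : Finset (ThetaVert r t s L) → ℕ} (htr : t < r) (hd : 0 < r - t)
    (hw : ∀ e ∈ thetaEdges r t L, 1 ≤ w e) {i : Fin s} {m : ℕ} (hm : m < L i)
    (hmt : (m + 1) * (r - t) < t) (hm1 : m + 1 < L i) :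
    ∃ u ∈ ed r t L i m, ∃ v ∈ ed r t L i m,
      sigmaE (thetaEdges r t L) w u ≠ sigmaE (thetaEdges r t L) w v := by
  have hex : (m + 1) * (r - t) = m * (r - t) + (r - t) := by ring
  refine ⟨vX r s L ⟨m * (r - t), by omega⟩, vX_mem.mpr ⟨by simp, by simp; omega⟩,
    vX r s L ⟨(m + 1) * (r - t), hmt⟩, vX_mem.mpr ⟨by simp; omega, by simp; omega⟩, ?_⟩
  exact (sigma_vX_lt htr hw (by simp; omega) hm1 (by simp) (by simp; omega)).ne

/-- Any edge containing two `y`-classes is properly coloured. -/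
lemma good_edge_ypair {w : Finset (ThetaVert r t s L) → ℕ} (htr : t < r) (hd : 0 < r - t)
    (hw : ∀ e ∈ thetaEdges r t L, 1 ≤ w e) {i : Fin s} {m mh : ℕ} (hm : m < L i)
    (hmh : mh < L i) {b b' : Fin t} (hbb : (b' : ℕ) ≤ (b : ℕ))
    (hmem : L i * (r - t) + (b : ℕ) < m * (r - t) + r)
    (hw1 : L i * (r - t) + (b' : ℕ) < mh * (r - t) + r)
    (hw2 : mh * (r - t) + r ≤ L i * (r - t) + (b : ℕ)) :
    ∃ u ∈ ed r t L i m, ∃ v ∈ ed r t L i m,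
      sigmaE (thetaEdges r t L) w u ≠ sigmaE (thetaEdges r t L) w v := by
  have hlow : m * (r - t) < L i * (r - t) := by
    have g := Nat.mul_le_mul_right (r - t) (show m + 1 ≤ L i by omega)
    have e : (m + 1) * (r - t) = m * (r - t) + (r - t) := by ring
    omega
  refine ⟨vY r s L b, vY_mem.mpr ⟨by omega, hmem⟩,
    vY r s L b', vY_mem.mpr ⟨by omega, by omega⟩, ?_⟩
  exact (sigma_vY_lt htr hd hw hbb hmh hw1 hw2).ne


/-- All-ones weighting properly colours every edge: divisible short case. -/
lemma good_edges_ones_dvd_short {k : ℕ} (hs : 3 ≤ s) (htr : t < r) (h2t : r < 2 * t)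
    (hrk : r = k * (r - t)) (hk3 : 3 ≤ k) (htk : t = (k - 1) * (r - t))
    (hLall : ∀ j, t ≤ L j * (r - t)) (hshort : ∀ j, L j ≤ 2 * (k - 1))
    {i : Fin s} {m : ℕ} (hm : m < L i) :
    ∃ u ∈ ed r t L i m, ∃ v ∈ ed r t L i m,
      sigmaE (thetaEdges r t L) (fun _ => 1) u ≠ sigmaE (thetaEdges r t L) (fun _ => 1) v := by
  have hd : 0 < r - t := by omega
  have hdt : r - t < t := by omega
  have ht0 : 0 < t := by omega
  have hw : ∀ e ∈ thetaEdges r t L, 1 ≤ (fun (_ : Finset (ThetaVert r t s L)) => 1) e :=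
    fun e _ => le_refl 1
  have hkd : ∀ j, k - 1 ≤ L j := by
    intro j
    apply le_of_mul_le hd
    rw [← htk]; exact hLall j
  have hkk : (k - 2) * (r - t) + (r - t) = t := by
    have e2 : (k - 2) + 1 = k - 1 := by omega
    calc (k - 2) * (r - t) + (r - t) = ((k - 2) + 1) * (r - t) := by ring
      _ = (k - 1) * (r - t) := by rw [e2]
      _ = t := htk.symm
  by_cases hA : m + 3 ≤ k
  · apply good_edge_xpair htr hd hw hm
    · have g := Nat.mul_le_mul_right (r - t) (show m + 1 ≤ k - 2 by omega)
      omega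
    · have := hkd i; omega
  by_cases hB : L i + 2 ≤ m + k
  · have hsub : (L i + 1 - k) * (r - t) + k * (r - t) = L i * (r - t) + (r - t) := by
      have e1 : (L i + 1 - k) + k = L i + 1 := by have := hkd i; omega
      calc (L i + 1 - k) * (r - t) + k * (r - t) = ((L i + 1 - k) + k) * (r - t) := by ring
        _ = (L i + 1) * (r - t) := by rw [e1]
        _ = L i * (r - t) + (r - t) := by ring
    have hmem : L i * (r - t) + (r - t) < m * (r - t) + r := by
      have g := Nat.mul_le_mul_right (r - t) hB
      have e1 : (L i + 2) * (r - t) = L i * (r - t) + 2 * (r - t) := by ring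
      have e2 : (m + k) * (r - t) = m * (r - t) + k * (r - t) := by ring
      omega
    apply good_edge_ypair htr hd hw hm (mh := L i + 1 - k) (b := ⟨r - t, hdt⟩)
      (b' := ⟨0, ht0⟩) (by have := hkd i; omega) (by simp) (by simp; omega)
      (by simp; omega) (by simp; omega)
  push_neg at hA hB
  have hLik : k ≤ L i := by omega
  have hnd : t < L i * (r - t) := by
    have g := Nat.mul_le_mul_right (r - t) hLik
    omega
  obtain ⟨j, hij⟩ := exists_other hs i
  have hLj := hLall j
  by_cases hC : m + 2 ≤ k
  · -- m = k - 2 : x_{t-1} versus internal vertex at position t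
    have hmval : m * (r - t) + (r - t) = t := by
      have e2 : m + 1 = k - 1 := by omega
      calc m * (r - t) + (r - t) = (m + 1) * (r - t) := by ring
        _ = (k - 1) * (r - t) := by rw [e2]
        _ = t := htk.symm
    have pf1 : t - 1 < t := by omega
    have pf2 : 0 < L i * (r - t) - t := by omega
    have ha : ∀ m', m' < k - 1 → m' * (r - t) ≤ ((⟨t - 1, pf1⟩ : Fin t) : ℕ) := by
      intro m' hm'
      have g := Nat.mul_le_mul_right (r - t) (show m' ≤ k - 2 by omega)
      simp
      omega
    have hle := sigma_vX_ge (w := fun _ => 1) htr hd hij.symm hLj hnd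
      (show k - 1 ≤ L i by omega) (hkd j) ha
    simp only [Finset.sum_const, Finset.card_range, smul_eq_mul, mul_one] at hle
    have hIv := sigma_vI_ones hd hrk hk3 (le_of_lt hnd) ⟨0, pf2⟩
    refine ⟨vX r s L ⟨t - 1, pf1⟩, vX_mem.mpr ⟨by simp; omega, by simp; omega⟩,
      vI r t L i ⟨0, pf2⟩, vI_mem.mpr ⟨rfl, by simp; omega, by simp; omega⟩, ?_⟩
    omega
  · -- k - 1 ≤ m : y_0 versus internal vertex at position m(r-t)
    push_neg at hC
    have pf2 : m * (r - t) - t < L i * (r - t) - t := by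
      have g := Nat.mul_le_mul_right (r - t) (show m + 1 ≤ L i by omega)
      have e : (m + 1) * (r - t) = m * (r - t) + (r - t) := by ring
      omega
    have htm : t ≤ m * (r - t) := by
      have g := Nat.mul_le_mul_right (r - t) (show k - 1 ≤ m by omega)
      omega
    have hymem : L i * (r - t) < m * (r - t) + r := by
      have g := Nat.mul_le_mul_right (r - t) (show L i + 1 ≤ m + k by
        have := hshort i; omega)
      have e1 : (L i + 1) * (r - t) = L i * (r - t) + (r - t) := by ring
      have e2 : (m + k) * (r - t) = m * (r - t) + k * (r - t) := by ring
      omega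
    have hybound : ∀ (u : Fin s), ∀ m', m' < k - 1 →
        L u * (r - t) + ((⟨0, ht0⟩ : Fin t) : ℕ) < (L u - 1 - m') * (r - t) + r := by
      intro u m' hm'
      have hLu := hkd u
      have e : (L u - 1 - m') * (r - t) + (1 + m') * (r - t) = L u * (r - t) := by
        have e1 : (L u - 1 - m') + (1 + m') = L u := by omega
        calc (L u - 1 - m') * (r - t) + (1 + m') * (r - t)
            = ((L u - 1 - m') + (1 + m')) * (r - t) := by ring
          _ = L u * (r - t) := by rw [e1]
      have g := Nat.mul_le_mul_right (r - t) (show m' + 2 ≤ k by omega)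
      have e2 : (m' + 2) * (r - t) = (1 + m') * (r - t) + (r - t) := by ring
      simp
      omega
    have hge := sigma_vY_ge (w := fun _ => 1) htr hd ht0 hij.symm hLj hnd
      (show k - 1 ≤ L i by omega) (hkd j) (b := ⟨0, ht0⟩) (hybound i) (hybound j)
    simp only [Finset.sum_const, Finset.card_range, smul_eq_mul, mul_one] at hge
    have hIv := sigma_vI_ones hd hrk hk3 (le_of_lt hnd) ⟨m * (r - t) - t, pf2⟩
    refine ⟨vY r s L ⟨0, ht0⟩, vY_mem.mpr ⟨by simp; omega, by simp; omega⟩,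
      vI r t L i ⟨m * (r - t) - t, pf2⟩, vI_mem.mpr ⟨rfl, by simp; omega, by simp; omega⟩, ?_⟩
    omega


/-- All-ones weighting properly colours every edge: non-divisible case. -/
lemma good_edges_ones_ndvd (hs : 3 ≤ s) (hr3 : 3 ≤ r) (htr : t < r) (h2t : r < 2 * t)
    (hndvd : ¬ (r - t) ∣ r) (hLall : ∀ j, t ≤ L j * (r - t))
    {i : Fin s} {m : ℕ} (hm : m < L i) :
    ∃ u ∈ ed r t L i m, ∃ v ∈ ed r t L i m,
      sigmaE (thetaEdges r t L) (fun _ => 1) u ≠ sigmaE (thetaEdges r t L) (fun _ => 1) v := by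
  have hd : 0 < r - t := by omega
  have hdt : r - t < t := by omega
  have ht0 : 0 < t := by omega
  have hw : ∀ e ∈ thetaEdges r t L, 1 ≤ (fun (_ : Finset (ThetaVert r t s L)) => 1) e :=
    fun e _ => le_refl 1
  have hndt : ¬ (r - t) ∣ t := by
    intro hdvd
    apply hndvd
    obtain ⟨c, hc⟩ := hdvd
    exact ⟨c + 1, by
      have e : (r - t) * (c + 1) = (r - t) * c + (r - t) := by ring
      omega⟩
  have hndall : ∀ j, t < L j * (r - t) := by
    intro j
    rcases Nat.lt_or_ge t (L j * (r - t)) with h | h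
    · exact h
    · exfalso
      have heq : t = L j * (r - t) := by have := hLall j; omega
      exact hndt ⟨L j, by rw [Nat.mul_comm]; exact heq⟩
  have hL2 : ∀ j, 2 ≤ L j := by
    intro j
    have h1 := hndall j
    by_contra h'
    push_neg at h'
    interval_cases h : L j <;> simp [h] at h1 <;> omega
  by_cases hm0 : m = 0
  · subst hm0
    exact good_edge_xpair htr hd hw hm (by simp; omega) (by have := hL2 i; omega)
  by_cases hml : m + 1 = L i
  · -- last edge: two y-classes
    obtain ⟨K, hKd, hK1⟩ : ∃ K, K * (r - t) ≤ r - 1 ∧ r - 1 < K * (r - t) + (r - t) := by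
      refine ⟨(r - 1) / (r - t), ?_, ?_⟩ <;>
      · have hmod : (r - 1) / (r - t) * (r - t) + (r - 1) % (r - t) = r - 1 := by
          conv_rhs => rw [← Nat.div_add_mod (r - 1) (r - t)]
          ring
        have := Nat.mod_lt (r - 1) hd
        omega
    have hK2 : 2 ≤ K := by
      by_contra h'
      push_neg at h'
      have g := Nat.mul_le_mul_right (r - t) (show K ≤ 1 by omega)
      have e : 1 * (r - t) = r - t := by ring
      omega
    have hKL : K ≤ L i := by
      have hlt : K * (r - t) < (L i + 1) * (r - t) := by
        have e : (L i + 1) * (r - t) = L i * (r - t) + (r - t) := by ring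
        have := hndall i
        omega
      have := lt_of_mul_lt hlt
      omega
    have hsub : (L i - K) * (r - t) + K * (r - t) = L i * (r - t) := by
      have e1 : (L i - K) + K = L i := by omega
      calc (L i - K) * (r - t) + K * (r - t) = ((L i - K) + K) * (r - t) := by ring
        _ = L i * (r - t) := by rw [e1]
    have hKg := Nat.mul_le_mul_right (r - t) hK2
    have e2K : 2 * (r - t) = (r - t) + (r - t) := by ring
    have hsubm : (L i - 1) * (r - t) + (r - t) = L i * (r - t) := by
      have e1 : (L i - 1) + 1 = L i := by have := hL2 i; omega
      calc (L i - 1) * (r - t) + (r - t) = ((L i - 1) + 1) * (r - t) := by ring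
        _ = L i * (r - t) := by rw [e1]
    have hmeq : m = L i - 1 := by omega
    apply good_edge_ypair htr hd hw hm (mh := L i - K) (b := ⟨t - 1, by omega⟩)
      (b' := ⟨0, ht0⟩) (by omega) (by simp)
      (by simp; subst hmeq; omega) (by simp; omega) (by simp; omega)
  -- middle edges
  have hm1 : 1 ≤ m := by omega
  have hm2 : m + 2 ≤ L i := by omega
  have hmn : m * (r - t) + (r - t) + (r - t) ≤ L i * (r - t) := by
    have g := Nat.mul_le_mul_right (r - t) hm2
    have e : (m + 2) * (r - t) = m * (r - t) + (r - t) + (r - t) := by ring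
    omega
  have hm1d : (r - t) ≤ m * (r - t) := by
    have g := Nat.mul_le_mul_right (r - t) hm1
    have e : 1 * (r - t) = r - t := by ring
    omega
  by_cases hxy : m * (r - t) < t ∧ L i * (r - t) < m * (r - t) + r
  · by_cases hxp : (m + 1) * (r - t) < t
    · exact good_edge_xpair htr hd hw hm hxp (by omega)
    · -- x_{t-1} versus internal vertex at position t
      obtain ⟨A, hAd, hA1⟩ : ∃ A, A * (r - t) ≤ t ∧ t < A * (r - t) + (r - t) ∧
          ∀ m' : ℕ, m' * (r - t) ≤ t → m' ≤ A := by
        refine ⟨t / (r - t), ?_, ?_, ?_⟩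
        · have := Nat.div_mul_le_self t (r - t); omega
        · have hmod : t / (r - t) * (r - t) + t % (r - t) = t := by
            conv_rhs => rw [← Nat.div_add_mod t (r - t)]
            ring
          have := Nat.mod_lt t hd
          omega
        · intro m' h
          exact (Nat.le_div_iff_mul_le hd).mpr h
      obtain ⟨hA1, hAle⟩ := hA1
      have hAL : ∀ j, A < L j := by
        intro j
        exact lt_of_mul_lt (d := r - t) (by have := hndall j; omega)
      have pfc : 0 < L i * (r - t) - t := by have := hndall i; omega
      have pf1 : t - 1 < t := by omega
      have hanet : ∀ m' : ℕ, m' * (r - t) ≠ t := by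
        intro m' h
        exact hndt ⟨m', by rw [Nat.mul_comm]; exact h.symm⟩
      have hIv : sigmaE (thetaEdges r t L) (fun _ => 1) (vI r t L i ⟨0, pfc⟩) = A + 1 := by
        rw [sigma_vI (by omega) hd (hLall i) ⟨0, pfc⟩]
        rw [show (Finset.range (L i)).filter
            (fun m' => m' * (r - t) ≤ t + ((⟨0, pfc⟩ : Fin (L i * (r - t) - t)) : ℕ) ∧
              t + ((⟨0, pfc⟩ : Fin (L i * (r - t) - t)) : ℕ) < m' * (r - t) + r)
            = Finset.range (A + 1) from ?_]
        · simp
        · ext m'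
          simp only [Finset.mem_filter, Finset.mem_range, Fin.val_mk]
          constructor
          · rintro ⟨h1, h2, h3⟩
            have := hAle m' (by omega)
            omega
          · intro h1
            have g := Nat.mul_le_mul_right (r - t) (show m' ≤ A by omega)
            exact ⟨by have := hAL i; omega, by omega, by omega⟩
      have ha : ∀ m', m' < A + 1 → m' * (r - t) ≤ ((⟨t - 1, pf1⟩ : Fin t) : ℕ) := by
        intro m' hm'
        have g := Nat.mul_le_mul_right (r - t) (show m' ≤ A by omega)
        have := hanet m'
        simp
        omega
      obtain ⟨j, hij⟩ := exists_other hs i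
      have hle := sigma_vX_ge (w := fun _ => 1) (N := A + 1) htr hd hij.symm (hLall j)
        (hndall i) (by have := hAL i; omega) (by have := hAL j; omega) ha
      simp only [Finset.sum_const, Finset.card_range, smul_eq_mul, mul_one] at hle
      refine ⟨vX r s L ⟨t - 1, pf1⟩, vX_mem.mpr ⟨by simp; omega, by simp; omega⟩,
        vI r t L i ⟨0, pfc⟩, vI_mem.mpr ⟨rfl, by simp; omega, by simp; omega⟩, ?_⟩
      omega
  · -- interior adjacent pair
    obtain ⟨b₀, hb1, hb2, hb3, hb4⟩ : ∃ b₀, r ≤ b₀ ∧ b₀ + 1 ≤ L i * (r - t) ∧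
        m * (r - t) + (r - t) ≤ b₀ ∧ b₀ < m * (r - t) + r := by
      by_cases hbc : m * (r - t) + r ≤ L i * (r - t)
      · exact ⟨m * (r - t) + r - 1, by omega, by omega, by omega, by omega⟩
      · push_neg at hbc
        have hmdt : t ≤ m * (r - t) := by
          by_contra h'
          exact hxy ⟨by omega, by omega⟩
        exact ⟨L i * (r - t) - 1, by omega, by omega, by omega, by omega⟩
    obtain ⟨q, hq1, hq2⟩ : ∃ q, q * (r - t) ≤ b₀ - r ∧ b₀ - r < q * (r - t) + (r - t) := by
      refine ⟨(b₀ - r) / (r - t), ?_, ?_⟩ <;>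
      · have hmod : (b₀ - r) / (r - t) * (r - t) + (b₀ - r) % (r - t) = b₀ - r := by
          conv_rhs => rw [← Nat.div_add_mod (b₀ - r) (r - t)]
          ring
        have := Nat.mod_lt (b₀ - r) hd
        omega
    have heq : (r - 1 + q * (r - t)) + 1 = q * (r - t) + r := by omega
    have hp1 : t ≤ r - 1 + q * (r - t) := by omega
    have hp2 : (r - 1 + q * (r - t)) + 1 < L i * (r - t) := by omega
    have hqL : q < L i := by
      apply lt_of_mul_lt (d := r - t)
      omega
    have hlt := sigma_vI_succ_lt (w := fun _ => 1) htr hd hw hndvd hqL heq hp1 hp2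
    refine ⟨vI r t L i ⟨(r - 1 + q * (r - t)) + 1 - t, by omega⟩,
      vI_mem.mpr ⟨rfl, by simp; omega, by simp; omega⟩,
      vI r t L i ⟨(r - 1 + q * (r - t)) - t, by omega⟩,
      vI_mem.mpr ⟨rfl, by simp; omega, by simp; omega⟩, hlt.ne⟩


/-- The 2-weighting `w2` properly colours every edge (divisible case). -/
lemma good_edges_w2 {k : ℕ} (hs : 3 ≤ s) (htr : t < r) (h2t : r < 2 * t)
    (hrk : r = k * (r - t)) (hk3 : 3 ≤ k) (htk : t = (k - 1) * (r - t))
    (hLall : ∀ j, t ≤ L j * (r - t))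
    {i : Fin s} {m : ℕ} (hm : m < L i) :
    ∃ u ∈ ed r t L i m, ∃ v ∈ ed r t L i m,
      sigmaE (thetaEdges r t L) (w2 r t L k) u ≠ sigmaE (thetaEdges r t L) (w2 r t L k) v := by
  have hd : 0 < r - t := by omega
  have hdt : r - t < t := by omega
  have ht0 : 0 < t := by omega
  have hw : ∀ e ∈ thetaEdges r t L, 1 ≤ w2 r t L k e := fun e _ => w2_ge_one e
  have hkd : ∀ j, k - 1 ≤ L j := by
    intro j
    apply le_of_mul_le hd
    rw [← htk]; exact hLall j
  have hkk : (k - 2) * (r - t) + (r - t) = t := by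
    have e2 : (k - 2) + 1 = k - 1 := by omega
    calc (k - 2) * (r - t) + (r - t) = ((k - 2) + 1) * (r - t) := by ring
      _ = (k - 1) * (r - t) := by rw [e2]
      _ = t := htk.symm
  by_cases hA : m + 3 ≤ k
  · apply good_edge_xpair htr hd hw hm
    · have g := Nat.mul_le_mul_right (r - t) (show m + 1 ≤ k - 2 by omega)
      omega
    · have := hkd i; omega
  by_cases hB : L i + 2 ≤ m + k
  · have hsub : (L i + 1 - k) * (r - t) + k * (r - t) = L i * (r - t) + (r - t) := by
      have e1 : (L i + 1 - k) + k = L i + 1 := by have := hkd i; omega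
      calc (L i + 1 - k) * (r - t) + k * (r - t) = ((L i + 1 - k) + k) * (r - t) := by ring
        _ = (L i + 1) * (r - t) := by rw [e1]
        _ = L i * (r - t) + (r - t) := by ring
    have hmem : L i * (r - t) + (r - t) < m * (r - t) + r := by
      have g := Nat.mul_le_mul_right (r - t) hB
      have e1 : (L i + 2) * (r - t) = L i * (r - t) + 2 * (r - t) := by ring
      have e2 : (m + k) * (r - t) = m * (r - t) + k * (r - t) := by ring
      omega
    apply good_edge_ypair htr hd hw hm (mh := L i + 1 - k) (b := ⟨r - t, hdt⟩)
      (b' := ⟨0, ht0⟩) (by have := hkd i; omega) (by simp) (by simp; omega)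
      (by simp; omega) (by simp; omega)
  push_neg at hA hB
  have hLik : k ≤ L i := by omega
  have hnd : t < L i * (r - t) := by
    have g := Nat.mul_le_mul_right (r - t) hLik
    omega
  by_cases hC2 : m + 2 ≤ k ∧ L i = 2 * k - 3
  · -- the corner case: x_{t-1} versus internal vertex at position t
    obtain ⟨hC2a, hC2b⟩ := hC2
    have hmeq : m = k - 2 := by omega
    subst hmeq
    have pf1 : t - 1 < t := by omega
    have pf2 : 0 < L i * (r - t) - t := by omega
    -- σ at the internal vertex of position t equals k + 2
    have hqv : (t + ((⟨0, pf2⟩ : Fin (L i * (r - t) - t)) : ℕ)) / (r - t) = k - 1 := by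
      simp only [Fin.val_mk, Nat.add_zero]
      nth_rewrite 1 [htk]
      exact Nat.mul_div_cancel (k - 1) hd
    have hIv : sigmaE (thetaEdges r t L) (w2 r t L k) (vI r t L i ⟨0, pf2⟩) = k + 2 := by
      rw [sigma_vI_div hd hrk hk3 ⟨0, pf2⟩ (le_of_lt hnd), hqv]
      have hIcc : Finset.Icc (k - 1 - (k - 1)) (k - 1)
          = insert 0 (insert (k - 1) (Finset.Ioo 0 (k - 1))) := by
        ext x
        simp only [Finset.mem_Icc, Finset.mem_insert, Finset.mem_Ioo]
        omega
      rw [hIcc, Finset.sum_insert (by simp only [Finset.mem_insert, Finset.mem_Ioo]; omega),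
        Finset.sum_insert (by simp only [Finset.mem_Ioo]; omega)]
      have h0 : w2 r t L k (ed r t L i 0) = 2 := w2_ed_zero (by omega)
      have hk1 : w2 r t L k (ed r t L i (k - 1)) = 2 := by
        rw [w2_ed htr hd hnd (by omega)]
        exact if_pos dvd_rfl
      have hmid : ∑ m' ∈ Finset.Ioo 0 (k - 1), w2 r t L k (ed r t L i m')
          = ∑ m' ∈ Finset.Ioo 0 (k - 1), 1 := by
        apply Finset.sum_congr rfl
        intro m' hm'
        simp only [Finset.mem_Ioo] at hm'
        rw [w2_ed htr hd hnd (by omega)]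
        apply if_neg
        intro hdvd
        have := Nat.le_of_dvd (by omega) hdvd
        omega
      rw [h0, hk1, hmid]
      simp only [Finset.sum_const, Nat.card_Ioo, smul_eq_mul, mul_one]
      omega
    -- σ at x_{t-1} is at least 2k
    obtain ⟨j, hij⟩ := exists_other hs i
    have ha : ∀ m', m' < k - 1 → m' * (r - t) ≤ ((⟨t - 1, pf1⟩ : Fin t) : ℕ) := by
      intro m' hm'
      have g := Nat.mul_le_mul_right (r - t) (show m' ≤ k - 2 by omega)
      simp
      omega
    have hle := sigma_vX_ge (w := w2 r t L k) (N := k - 1) htr hd hij.symm (hLall j)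
      hnd (by omega) (hkd j) ha
    have hblock : ∀ (u : Fin s), 0 < L u →
        k ≤ ∑ m' ∈ Finset.range (k - 1), w2 r t L k (ed r t L u m') := by
      intro u hu
      have hr01 : Finset.range (k - 1) = insert 0 (Finset.Ioo 0 (k - 1)) := by
        ext x
        simp only [Finset.mem_range, Finset.mem_insert, Finset.mem_Ioo]
        omega
      rw [hr01, Finset.sum_insert (by simp only [Finset.mem_Ioo]; omega), w2_ed_zero hu]
      have hcard := Finset.card_nsmul_le_sum (Finset.Ioo 0 (k - 1))
        (fun m' => w2 r t L k (ed r t L u m')) 1 (fun x _ => w2_ge_one _)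
      simp only [Nat.card_Ioo, smul_eq_mul, mul_one] at hcard
      omega
    have hblocki := hblock i (by omega)
    have hblockj := hblock j (by have := hkd j; omega)
    refine ⟨vX r s L ⟨t - 1, pf1⟩, vX_mem.mpr ⟨by simp; omega, by simp; omega⟩,
      vI r t L i ⟨0, pf2⟩, vI_mem.mpr ⟨rfl, by simp; omega, by simp; omega⟩, ?_⟩
    omega
  · -- main interior case: two adjacent interior classes with distinct window weights
    have hk2 : 2 ≤ k - 1 := by omega
    obtain ⟨Qlo, Qhi, hQ1, hQ2, hQ3, hQ4, hQ5⟩ : ∃ Qlo Qhi, k - 1 ≤ Qlo ∧ m ≤ Qlo ∧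
        Qhi + 1 ≤ L i ∧ Qhi + 1 ≤ m + k ∧ Qlo + (k - 2) ≤ Qhi := by
      by_cases hC : m + 2 ≤ k
      · -- m = k-2 and L i ≥ 2k-2
        have hLge : 2 * k - 2 ≤ L i := by
          rcases Nat.lt_or_ge (L i) (2 * k - 2) with h | h
          · exfalso; exact hC2 ⟨hC, by omega⟩
          · exact h
        exact ⟨k - 1, 2 * k - 3, by omega, by omega, by omega, by omega, by omega⟩
      · push_neg at hC
        by_cases hD : m + k ≤ L i
        · exact ⟨m, m + k - 1, by omega, by omega, by omega, by omega, by omega⟩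
        · exact ⟨m, L i - 1, by omega, by omega, by omega, by omega, by omega⟩
    obtain ⟨M, hMd, hM1, hM2⟩ : ∃ M, (k - 1) ∣ M ∧ Qlo ≤ M ∧ M ≤ Qlo + (k - 2) := by
      refine ⟨(Qlo + k - 2) / (k - 1) * (k - 1), Dvd.intro_left _ rfl, ?_, ?_⟩ <;>
      · have hmod : (Qlo + k - 2) / (k - 1) * (k - 1) + (Qlo + k - 2) % (k - 1)
            = Qlo + k - 2 := by
          conv_rhs => rw [← Nat.div_add_mod (Qlo + k - 2) (k - 1)]
          ring
        have := Nat.mod_lt (Qlo + k - 2) (show 0 < k - 1 by omega)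
        omega
    obtain ⟨q, hqk, hqm, hqmk, hqL, hww⟩ : ∃ q, k - 1 ≤ q ∧ m ≤ q ∧ q + 2 ≤ m + k ∧
        q + 1 < L i ∧ w2 r t L k (ed r t L i (q - (k - 1))) ≠ w2 r t L k (ed r t L i (q + 1)) := by
      by_cases hMQ : M < Qhi
      · refine ⟨M, by omega, by omega, by omega, by omega, ?_⟩
        rw [w2_ed htr hd hnd (by omega), w2_ed htr hd hnd (by omega)]
        rw [if_pos (Nat.dvd_sub hMd dvd_rfl), if_neg ?_]
        · omega
        · intro hdvd
          have h1 := Nat.dvd_sub hdvd hMd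
          simp only [Nat.add_sub_cancel_left] at h1
          have := Nat.le_of_dvd (by omega) h1
          omega
      · have hMQe : M = Qhi := by omega
        refine ⟨M - 1, by omega, by omega, by omega, by omega, ?_⟩
        have hM1e : M - 1 + 1 = M := by omega
        rw [w2_ed htr hd hnd (by omega), w2_ed htr hd hnd (by omega)]
        rw [hM1e, if_pos hMd, if_neg ?_]
        · omega
        · intro hdvd
          have h2 : (k - 1) ∣ (M - 1 - (k - 1)) + (k - 1) := Nat.dvd_add hdvd dvd_rfl
          have h3 : M - 1 - (k - 1) + (k - 1) = M - 1 := by omega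
          rw [h3] at h2
          have h4 := Nat.dvd_sub hMd h2
          have h5 : M - (M - 1) = 1 := by omega
          rw [h5] at h4
          have := Nat.le_of_dvd (by omega) h4
          omega
    have hne := sigma_vI_adjacent_ne hd hrk hk3 htk hqk hqL (w2 r t L k) hww
    have htq : t ≤ q * (r - t) := by
      have g := Nat.mul_le_mul_right (r - t) hqk
      omega
    have hmulmq : m * (r - t) ≤ q * (r - t) := Nat.mul_le_mul_right _ hqm
    have hq1e : (q + 1) * (r - t) = q * (r - t) + (r - t) := by ring
    have hq2e : (q + 2) * (r - t) = q * (r - t) + 2 * (r - t) := by ring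
    have hup : (q + 2) * (r - t) ≤ (m + k) * (r - t) := Nat.mul_le_mul_right _ hqmk
    have hmk : (m + k) * (r - t) = m * (r - t) + k * (r - t) := by ring
    refine ⟨_, vI_mem.mpr ⟨rfl, by simp; omega, by simp; omega⟩,
      _, vI_mem.mpr ⟨rfl, by simp; omega, by simp; omega⟩, hne⟩


/-- With a single weight, a fully interior edge of a long path is monochromatic. -/
lemma not_hasNSD_one {k : ℕ} (hr3 : 3 ≤ r) (htr : t < r) (h2t : r < 2 * t)
    (hrk : r = k * (r - t)) (hk3 : 3 ≤ k) (htk : t = (k - 1) * (r - t))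
    (hLall : ∀ j, t ≤ L j * (r - t)) {i0 : Fin s} (hbig : 2 * (k - 1) < L i0) :
    ¬ HasNSDEdgeWeighting (thetaEdges r t L) 1 := by
  rintro ⟨w, hwb, hgood⟩
  have hd : 0 < r - t := by omega
  have hLik : 2 * k - 1 ≤ L i0 := by omega
  have hgk := Nat.mul_le_mul_right (r - t) hLik
  have egk : (2 * k - 1) * (r - t) = (k - 1) * (r - t) + k * (r - t) := by
    have e1 : (2 * k - 1) = (k - 1) + k := by omega
    calc (2 * k - 1) * (r - t) = ((k - 1) + k) * (r - t) := by rw [← e1]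
      _ = (k - 1) * (r - t) + k * (r - t) := by ring
  have hnd : t < L i0 * (r - t) := by omega
  have hmm : k - 1 < L i0 := by omega
  have he := ed_mem_thetaEdges (r := r) (t := t) (L := L) hmm
  have pfa : 0 < L i0 * (r - t) - t := by omega
  have pfb : 1 < L i0 * (r - t) - t := by omega
  have mem1 : vI r t L i0 ⟨0, pfa⟩ ∈ ed r t L i0 (k - 1) :=
    vI_mem.mpr ⟨rfl, by simp; omega, by simp; omega⟩
  have mem2 : vI r t L i0 ⟨1, pfb⟩ ∈ ed r t L i0 (k - 1) :=
    vI_mem.mpr ⟨rfl, by simp; omega, by simp; omega⟩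
  have hne01 : vI r t L i0 ⟨0, pfa⟩ ≠ vI r t L i0 ⟨1, pfb⟩ := by
    intro h
    unfold vI at h
    injection h with h1
    rw [Sigma.mk.inj_iff] at h1
    have h3 := eq_of_heq h1.2
    have h4 : (0 : ℕ) = 1 := congrArg Fin.val h3
    omega
  have hcard : 2 ≤ (ed r t L i0 (k - 1)).card :=
    Finset.one_lt_card.mpr ⟨_, mem1, _, mem2, hne01⟩
  obtain ⟨u, hu, v, hv, hne⟩ := hgood _ he hcard
  have hwone : ∀ e ∈ thetaEdges r t L, w e = (fun _ => 1) e := by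
    intro e he'
    have := hwb e he'
    simp only
    omega
  have hall : ∀ x ∈ ed r t L i0 (k - 1), sigmaE (thetaEdges r t L) w x = k := by
    intro x hx
    rw [mem_ed] at hx
    rcases x with ((a | b) | ⟨i', c⟩)
    · exfalso
      obtain ⟨h1, h2⟩ := hx
      have := a.isLt
      omega
    · exfalso
      obtain ⟨h1, h2⟩ := hx
      have := hLall i0
      omega
    · obtain ⟨h0, h1, h2⟩ := hx
      subst h0
      refine (sigmaE_congr hwone _).trans ?_
      exact sigma_vI_ones hd hrk hk3 (le_of_lt hnd) c
  exact hne (by rw [hall u hu, hall v hv])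

end ThetaProof

open ThetaProof in
/-- For `r, s ≥ 3` and `r/2 < t < r`, and the `r`-uniform theta hypergraph
`H = Θ_t^r(ℓ_1,…,ℓ_s)`: if `r-t` divides `r`, `k = r/(r-t)` and `ℓ_i > 2(k-1)`
for some `i`, then `χ^e(H) = 2`; otherwise `χ^e(H) = 1`. -/
theorem chiE_theta_large_t (r t s : ℕ) (L : Fin s → ℕ) (hr : 3 ≤ r) (hs : 3 ≤ s)
    (htr : t < r) (h2t : r < 2 * t)
    (hL : ∀ i, t ≤ L i * (r - t))
    (hone : ∀ i j, L i = 1 → L j = 1 → i = j) :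
    (((r - t) ∣ r ∧ ∃ i, 2 * (r / (r - t) - 1) < L i) →
      IsLeast {k : ℕ | 0 < k ∧ HasNSDEdgeWeighting (thetaEdges r t L) k} 2) ∧
    (¬((r - t) ∣ r ∧ ∃ i, 2 * (r / (r - t) - 1) < L i) →
      IsLeast {k : ℕ | 0 < k ∧ HasNSDEdgeWeighting (thetaEdges r t L) k} 1) := by
  have hd : 0 < r - t := by omega
  have hdvdfacts : ∀ k : ℕ, r = k * (r - t) →
      3 ≤ k ∧ t = (k - 1) * (r - t) ∧ r / (r - t) = k := by
    intro k hrk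
    have hk3 : 3 ≤ k := by
      by_contra h'
      push_neg at h'
      have g := Nat.mul_le_mul_right (r - t) (show k ≤ 2 by omega)
      have e : 2 * (r - t) = (r - t) + (r - t) := by ring
      omega
    have htk : t = (k - 1) * (r - t) := by
      have e : (k - 1) * (r - t) + (r - t) = k * (r - t) := by
        have e2 : (k - 1) + 1 = k := by omega
        calc (k - 1) * (r - t) + (r - t) = ((k - 1) + 1) * (r - t) := by ring
          _ = k * (r - t) := by rw [e2]
      omega
    exact ⟨hk3, htk, Nat.div_eq_of_eq_mul_left hd hrk⟩
  constructor
  · rintro ⟨hdvd, i0, hbig⟩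
    obtain ⟨k, hk⟩ := hdvd
    have hrk : r = k * (r - t) := by rw [Nat.mul_comm]; exact hk
    obtain ⟨hk3, htk, hkdiv⟩ := hdvdfacts k hrk
    rw [hkdiv] at hbig
    constructor
    · refine ⟨by norm_num, w2 r t L k, fun e _ => ⟨w2_ge_one e, w2_le_two e⟩, ?_⟩
      intro e he _
      obtain ⟨i, m, hm, rfl⟩ := mem_thetaEdges.mp he
      exact good_edges_w2 hs htr h2t hrk hk3 htk hL hm
    · rintro x ⟨hx0, hxw⟩
      by_contra hlt
      push_neg at hlt
      have hx1 : x = 1 := by omega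
      subst hx1
      exact not_hasNSD_one hr htr h2t hrk hk3 htk hL hbig hxw
  · intro hnot
    constructor
    · refine ⟨Nat.one_pos, (fun _ => 1), fun e _ => ⟨le_refl 1, le_refl 1⟩, ?_⟩
      intro e he _
      obtain ⟨i, m, hm, rfl⟩ := mem_thetaEdges.mp he
      by_cases hdvd : (r - t) ∣ r
      · obtain ⟨k, hk⟩ := hdvd
        have hrk : r = k * (r - t) := by rw [Nat.mul_comm]; exact hk
        obtain ⟨hk3, htk, hkdiv⟩ := hdvdfacts k hrk
        have hshort : ∀ j, L j ≤ 2 * (k - 1) := by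
          intro j
          by_contra h'
          push_neg at h'
          exact hnot ⟨⟨k, by rw [Nat.mul_comm]; exact hrk⟩, j, by rw [hkdiv]; omega⟩
        exact good_edges_ones_dvd_short hs htr h2t hrk hk3 htk hL hshort hm
      · exact good_edges_ones_ndvd hs hr htr h2t hdvd hL hm
    · rintro x ⟨hx0, _⟩
      omega
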